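/- Let α, h₁, h₂ : ℝ^d → ℝ be probability density functions (nonnegative, Lebesgue-integrable with integral 1) with α everywhere positive, and set h = h₁ − h₂. Define E(ρ) = ∫ ρ(x)(log ρ(x) − 1) dx for a nonnegative density ρ. Assume that E(α + t h) is finite and that α + t h is a nonnegative density for all sufficiently small t ≥ 0, and that ∫ |h(x)| · |log α(x)| dx < ∞. Then the one-sided derivative of t ↦ E(α + t h) at t = 0 exists and equals ∫ h(x) log α(x) dx. -/

import Mathlib

open MeasureTheory Topology

lemma phi_convexOn : ConvexOn ℝ (Set.Ici (0:ℝ)) (fun s => s * (Real.log s - 1)) := by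
  have h2 : ConvexOn ℝ (Set.Ici (0:ℝ)) (fun s : ℝ => - s) :=
    (concaveOn_id (convex_Ici 0)).neg
  have h1 := Real.convexOn_mul_log.add h2
  convert h1 using 2 with s
  · rfl
  simp [Pi.add_apply]
  ring

lemma phi_lower {a c : ℝ} (ha : 0 < a) (hc : 0 ≤ c) :
    (c - a) * Real.log a ≤ c * (Real.log c - 1) - a * (Real.log a - 1) := by
  rcases eq_or_lt_of_le hc with rfl | hc
  · simp [Real.log_zero]; nlinarith [ha.le]
  · have hlog : Real.log (a / c) ≤ a / c - 1 := Real.log_le_sub_one_of_pos (div_pos ha hc)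
    have hd : Real.log (a / c) = Real.log a - Real.log c := Real.log_div ha.ne' hc.ne'
    rw [hd] at hlog
    have := mul_le_mul_of_nonneg_left hlog hc.le
    have hac : c * (a / c) = a := by field_simp
    nlinarith

lemma phi_slope {φ : ℝ → ℝ} (hφ : ConvexOn ℝ (Set.Ici (0:ℝ)) φ) {a c lam : ℝ}
    (ha : 0 ≤ a) (hc : 0 ≤ c) (h0 : 0 ≤ lam) (h1 : lam ≤ 1) :
    φ (a + lam * (c - a)) - φ a ≤ lam * (φ c - φ a) := by
  have := hφ.2 (Set.mem_Ici.2 ha) (Set.mem_Ici.2 hc) (by linarith : (0:ℝ) ≤ 1 - lam) h0 (by ring)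
  simp only [smul_eq_mul] at this
  have he : (1 - lam) * a + lam * c = a + lam * (c - a) := by ring
  rw [he] at this
  linarith

/-- let `α, h₁, h₂ : ℝ^d → ℝ` be probability density functions
(nonnegative, Lebesgue-integrable, integral 1) with `α` everywhere positive, and
`h = h₁ − h₂`.  With `E(ρ) = ∫ ρ (log ρ − 1)`, assume that for all sufficiently
small `t ≥ 0` the function `α + t h` is a nonnegative density and `E(α + t h)` is
finite (i.e. the integrand is integrable), and that `∫ |h| |log α| < ∞`.  Then the
one-sided derivative of `t ↦ E(α + t h)` at `t = 0` exists and equals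
`∫ h log α`. -/
theorem entropy_directional_derivative (d : ℕ)
    (α h₁ h₂ : EuclideanSpace ℝ (Fin d) → ℝ)
    (hα_pos : ∀ x, 0 < α x) (hh₁_nonneg : ∀ x, 0 ≤ h₁ x) (hh₂_nonneg : ∀ x, 0 ≤ h₂ x)
    (hα_int : Integrable α) (hh₁_int : Integrable h₁) (hh₂_int : Integrable h₂)
    (hα_one : ∫ x, α x = 1) (hh₁_one : ∫ x, h₁ x = 1) (hh₂_one : ∫ x, h₂ x = 1)
    (h : EuclideanSpace ℝ (Fin d) → ℝ) (hh : h = fun x => h₁ x - h₂ x)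
    (hfeas : ∀ᶠ t in 𝓝[≥] (0 : ℝ),
      (∀ x, 0 ≤ α x + t * h x) ∧
      Integrable (fun x => α x + t * h x) ∧
      (∫ x, (α x + t * h x)) = 1 ∧
      Integrable (fun x => (α x + t * h x) * (Real.log (α x + t * h x) - 1)))
    (hdom : Integrable (fun x => |h x| * |Real.log (α x)|)) :
    HasDerivWithinAt
      (fun t : ℝ => ∫ x, (α x + t * h x) * (Real.log (α x + t * h x) - 1))
      (∫ x, h x * Real.log (α x)) (Set.Ici (0 : ℝ)) 0 := by
  set f : ℝ → EuclideanSpace ℝ (Fin d) → ℝ :=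
    fun t x => (α x + t * h x) * (Real.log (α x + t * h x) - 1) with hf
  obtain ⟨t₀, ht₀, hfs⟩ := mem_nhdsGE_iff_exists_Icc_subset.1 hfeas
  have h0feas := hfs (Set.left_mem_Icc.2 ht₀.le)
  have ht₀feas := hfs (Set.right_mem_Icc.2 ht₀.le)
  have hI0 : Integrable (fun x => f 0 x) := h0feas.2.2.2
  have hIt₀ : Integrable (fun x => f t₀ x) := ht₀feas.2.2.2
  -- abs rewriting of the dominating function
  have hdom' : Integrable (fun x => |h x * Real.log (α x)|) := by
    have : (fun x => |h x * Real.log (α x)|) = fun x => |h x| * |Real.log (α x)| := by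
      funext x; exact abs_mul _ _
    rw [this]; exact hdom
  have hmeas : AEStronglyMeasurable (fun x => h x * Real.log (α x))
      (volume : Measure (EuclideanSpace ℝ (Fin d))) := by
    have hhm : AEStronglyMeasurable h (volume : Measure (EuclideanSpace ℝ (Fin d))) := by
      rw [hh]; exact (hh₁_int.sub hh₂_int).aestronglyMeasurable
    exact hhm.mul ((Real.measurable_log.comp_aemeasurable hα_int.aemeasurable).aestronglyMeasurable)
  have hint : Integrable (fun x => h x * Real.log (α x)) := by
    refine (integrable_norm_iff hmeas).1 ?_
    simpa [Real.norm_eq_abs, abs_mul] using hdom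
  -- key pointwise bounds
  have hbd : ∀ t ∈ Set.Ioc (0:ℝ) t₀, ∀ x,
      h x * Real.log (α x) ≤ (f t x - f 0 x) / t ∧
      (f t x - f 0 x) / t ≤ (f t₀ x - f 0 x) / t₀ := by
    intro t ht x
    have htpos : 0 < t := ht.1
    have hnn_t : 0 ≤ α x + t * h x := ((hfs ⟨ht.1.le, ht.2⟩).1) x
    have hnn_t₀ : 0 ≤ α x + t₀ * h x := ht₀feas.1 x
    have hf0 : f 0 x = α x * (Real.log (α x) - 1) := by simp [hf]
    have hft : f t x = (α x + t * h x) * (Real.log (α x + t * h x) - 1) := rfl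
    have hft₀ : f t₀ x = (α x + t₀ * h x) * (Real.log (α x + t₀ * h x) - 1) := rfl
    constructor
    · have hl := phi_lower (hα_pos x) hnn_t
      have he : (α x + t * h x - α x) = t * h x := by ring
      rw [he, ← hf0, ← hft] at hl
      rw [le_div_iff₀ htpos]
      have he2 : h x * Real.log (α x) * t = t * h x * Real.log (α x) := by ring
      linarith
    · have hlam0 : 0 ≤ t / t₀ := div_nonneg htpos.le ht₀.le
      have hlam1 : t / t₀ ≤ 1 := (div_le_one ht₀).2 ht.2
      have hs := phi_slope phi_convexOn (hα_pos x).le hnn_t₀ hlam0 hlam1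
      have harg : α x + t / t₀ * (α x + t₀ * h x - α x) = α x + t * h x := by
        rw [show α x + t₀ * h x - α x = t₀ * h x from by ring, ← mul_assoc,
          div_mul_cancel₀ _ ht₀.ne']
      rw [harg, ← hf0, ← hft, ← hft₀] at hs
      have h3 := mul_le_mul_of_nonneg_right hs ht₀.le
      have h4 : t / t₀ * (f t₀ x - f 0 x) * t₀ = (f t₀ x - f 0 x) * t := by
        rw [mul_comm (t / t₀) _, mul_assoc, div_mul_cancel₀ _ ht₀.ne']
      rw [div_le_div_iff₀ htpos ht₀]
      linarith
  -- dominated convergence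
  have key : Filter.Tendsto (fun t => ∫ x, (f t x - f 0 x) / t) (𝓝[>] (0:ℝ))
      (𝓝 (∫ x, h x * Real.log (α x))) := by
    apply tendsto_integral_filter_of_dominated_convergence
      (bound := fun x => |h x * Real.log (α x)| + |(f t₀ x - f 0 x) / t₀|)
    · filter_upwards [Ioc_mem_nhdsGT ht₀] with t ht
      exact (((hfs ⟨ht.1.le, ht.2⟩).2.2.2.sub hI0).div_const t).aestronglyMeasurable
    · filter_upwards [Ioc_mem_nhdsGT ht₀] with t ht
      refine Filter.Eventually.of_forall fun x => ?_
      obtain ⟨hge, hle⟩ := hbd t ht x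
      rw [Real.norm_eq_abs, abs_le]
      constructor
      · have := neg_abs_le (h x * Real.log (α x))
        have h2 := abs_nonneg ((f t₀ x - f 0 x) / t₀)
        linarith
      · have := le_abs_self ((f t₀ x - f 0 x) / t₀)
        have h2 := abs_nonneg (h x * Real.log (α x))
        linarith
    · exact hdom'.add ((hIt₀.sub hI0).div_const t₀).abs
    · refine Filter.Eventually.of_forall fun x => ?_
      have hinner : HasDerivAt (fun t : ℝ => α x + t * h x) (h x) 0 := by
        simpa using ((hasDerivAt_id (0:ℝ)).mul_const (h x)).const_add (α x)
      have houter : HasDerivAt (fun s : ℝ => s * (Real.log s - 1)) (Real.log (α x))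
          (α x + 0 * h x) := by
        have hne : α x ≠ 0 := (hα_pos x).ne'
        have := (hasDerivAt_id (α x)).mul ((Real.hasDerivAt_log hne).sub_const 1)
        have h2 : HasDerivAt (fun s : ℝ => s * (Real.log s - 1)) (Real.log (α x)) (α x) := by
          convert this using 1
          · rfl
          · rfl
          · rfl
          simp only [id_eq]
          field_simp
          ring
        simpa using h2
      have hg : HasDerivAt (fun t : ℝ => f t x) (h x * Real.log (α x)) 0 := by
        have h2 := houter.comp 0 hinner
        have h3 : HasDerivAt (fun t : ℝ => (α x + t * h x) * (Real.log (α x + t * h x) - 1))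
            (h x * Real.log (α x)) 0 := by
          have h2' : HasDerivAt (fun t : ℝ => (α x + t * h x) * (Real.log (α x + t * h x) - 1))
              (Real.log (α x) * h x) 0 := h2
          simpa [Function.comp, mul_comm] using h2'
        exact h3
      rw [hasDerivAt_iff_tendsto_slope] at hg
      have heq : (fun t : ℝ => (f t x - f 0 x) / t) = slope (fun t => f t x) 0 := by
        funext t; simp [slope_def_field]
      rw [heq]
      exact hg.mono_left (nhdsWithin_mono _ (fun y hy => Set.mem_compl_singleton_iff.2
        (ne_of_gt hy)))
  rw [hasDerivWithinAt_iff_tendsto_slope, Set.Ici_sdiff_left]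
  refine key.congr' ?_
  filter_upwards [Ioc_mem_nhdsGT ht₀] with t ht
  have hIt : Integrable (fun x => f t x) := (hfs ⟨ht.1.le, ht.2⟩).2.2.2
  rw [slope_def_field]
  rw [sub_zero]
  rw [← integral_sub hIt hI0, ← integral_div]
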